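/- Let (Ω, 𝓕, μ) be a probability space, T : Ω → Ω measurable with T_*μ ≪ μ, and let ρ : Ω → ℝ be a measurable function, positive μ-a.e., with ∫ ρ dμ = 1 and log ρ ∈ L¹(μ), such that ∫ f dμ = ∫ (f ∘ T)·ρ dμ for every bounded measurable f : Ω → ℝ. Then H(T_*μ|μ) ≤ −∫ log ρ dμ. -/

import Mathlib

open MeasureTheory Filter
open scoped Classical

/-- Relative entropy (Kullback–Leibler divergence) `H(θ|μ)`, valued in the extended reals:
`H(θ|μ) = ∫ (dθ/dμ)·log(dθ/dμ) dμ` if `θ ≪ μ` and this integral is defined, `+∞` otherwise. -/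
noncomputable def relEntropy {Ω : Type*} [MeasurableSpace Ω] (θ μ : Measure Ω) : EReal :=
  if θ ≪ μ ∧ Integrable (fun x => (θ.rnDeriv μ x).toReal * Real.log (θ.rnDeriv μ x).toReal) μ
  then ((∫ x, (θ.rnDeriv μ x).toReal * Real.log (θ.rnDeriv μ x).toReal ∂μ : ℝ) : EReal)
  else ⊤

private lemma ofReal_abs_aux (a : ℝ) :
    ENNReal.ofReal |a| = ENNReal.ofReal a + ENNReal.ofReal (-a) := by
  rcases le_total 0 a with h | h
  · rw [abs_of_nonneg h, ENNReal.ofReal_eq_zero.mpr (by linarith : -a ≤ 0), add_zero]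
  · rw [abs_of_nonpos h, ENNReal.ofReal_eq_zero.mpr h, zero_add]

theorem stmt_8 {Ω : Type*} [MeasurableSpace Ω] (μ : Measure Ω) [IsProbabilityMeasure μ]
    (T : Ω → Ω) (hT : Measurable T) (hac : μ.map T ≪ μ)
    (ρ : Ω → ℝ) (hρm : Measurable ρ) (hρ0 : ∀ᵐ x ∂μ, 0 < ρ x) (hρ1 : ∫ x, ρ x ∂μ = 1)
    (hlogρ : Integrable (fun x => Real.log (ρ x)) μ)
    (hchg : ∀ f : Ω → ℝ, Measurable f → (∃ C, ∀ x, |f x| ≤ C) →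
      ∫ x, f x ∂μ = ∫ x, f (T x) * ρ x ∂μ) :
    relEntropy (μ.map T) μ ≤ ((-∫ x, Real.log (ρ x) ∂μ : ℝ) : EReal) := by
  set ν : Measure Ω := μ.map T with hν_def
  have hνprob : IsProbabilityMeasure ν := Measure.isProbabilityMeasure_map hT.aemeasurable
  have hGm : Measurable (ν.rnDeriv μ) := Measure.measurable_rnDeriv ν μ
  set g : Ω → ℝ := fun x => (ν.rnDeriv μ x).toReal with hg_def
  have hgm : Measurable g := hGm.ennreal_toReal
  have hgnn : ∀ x, 0 ≤ g x := fun x => ENNReal.toReal_nonneg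
  have hg_int : Integrable g μ := Measure.integrable_toReal_rnDeriv
  have hg1 : ∫ x, g x ∂μ = 1 := by
    rw [hg_def, Measure.integral_toReal_rnDeriv hac, probReal_univ]
  have hρ_int : Integrable ρ μ := by
    by_contra h
    rw [integral_undef h] at hρ1
    norm_num at hρ1
  -- the function w = (g ∘ T) * ρ
  set w : Ω → ℝ := fun x => g (T x) * ρ x with hw_def
  have hwm : Measurable w := (hgm.comp hT).mul hρm
  have hw_nn : ∀ᵐ x ∂μ, 0 ≤ w x := by
    filter_upwards [hρ0] with x hx
    exact mul_nonneg (hgnn _) hx.le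
  -- truncations
  set φ : ℕ → Ω → ℝ := fun n x => min (g x) n with hφ_def
  have hφm : ∀ n, Measurable (φ n) := fun n => hgm.min measurable_const
  have hφnn : ∀ n x, 0 ≤ φ n x := fun n x => le_min (hgnn x) (Nat.cast_nonneg n)
  have hφ_le : ∀ n, ∫ x, φ n x ∂μ ≤ 1 := by
    intro n
    have hφint : Integrable (φ n) μ :=
      hg_int.mono (hφm n).aestronglyMeasurable
        (Filter.Eventually.of_forall fun x => by
          rw [Real.norm_eq_abs, Real.norm_eq_abs, abs_of_nonneg (hφnn n x),
            abs_of_nonneg (hgnn x)]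
          exact min_le_left _ _)
    calc ∫ x, φ n x ∂μ ≤ ∫ x, g x ∂μ :=
          integral_mono hφint hg_int fun x => min_le_left _ _
      _ = 1 := hg1
  have hφTρ_int : ∀ n, Integrable (fun x => φ n (T x) * ρ x) μ := by
    intro n
    refine Integrable.mono' ((hρ_int.abs.const_mul (n : ℝ))) 
      (((hφm n).comp hT).mul hρm).aestronglyMeasurable ?_
    filter_upwards with x
    rw [Real.norm_eq_abs, abs_mul]
    exact mul_le_mul_of_nonneg_right
      (by rw [abs_of_nonneg (hφnn n _)]; exact min_le_right _ _) (abs_nonneg _)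
  have key : ∀ n, ∫⁻ x, ENNReal.ofReal (φ n (T x) * ρ x) ∂μ ≤ 1 := by
    intro n
    have hnn : 0 ≤ᵐ[μ] fun x => φ n (T x) * ρ x := by
      filter_upwards [hρ0] with x hx
      exact mul_nonneg (hφnn n _) hx.le
    rw [← ofReal_integral_eq_lintegral_ofReal (hφTρ_int n) hnn]
    rw [← hchg (φ n) (hφm n) ⟨n, fun x => by
      rw [abs_of_nonneg (hφnn n x)]; exact min_le_right _ _⟩]
    exact ENNReal.ofReal_le_one.mpr (hφ_le n)
  have hwlint : ∫⁻ x, ENNReal.ofReal (w x) ∂μ ≤ 1 := by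
    have hmct : Tendsto (fun n => ∫⁻ x, ENNReal.ofReal (φ n (T x) * ρ x) ∂μ) atTop
        (nhds (∫⁻ x, ENNReal.ofReal (w x) ∂μ)) := by
      refine lintegral_tendsto_of_tendsto_of_monotone
        (fun n => (ENNReal.measurable_ofReal.comp
          (((hφm n).comp hT).mul hρm)).aemeasurable) ?_ ?_
      · filter_upwards [hρ0] with x hx
        intro m k hmk
        exact ENNReal.ofReal_le_ofReal (mul_le_mul_of_nonneg_right
          (min_le_min le_rfl (Nat.cast_le.mpr hmk)) hx.le)
      · filter_upwards with x
        obtain ⟨N, hN⟩ := exists_nat_ge (g (T x))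
        refine tendsto_const_nhds.congr' ?_
        filter_upwards [eventually_ge_atTop N] with n hn
        have : min (g (T x)) (n : ℝ) = g (T x) :=
          min_eq_left (hN.trans (Nat.cast_le.mpr hn))
        simp [hw_def, hφ_def, this]
    exact le_of_tendsto hmct (Filter.Eventually.of_forall key)
  have hw_int : Integrable w μ := by
    refine ⟨hwm.aestronglyMeasurable, ?_⟩
    rw [HasFiniteIntegral]
    calc ∫⁻ x, (‖w x‖₊ : ENNReal) ∂μ = ∫⁻ x, ENNReal.ofReal (w x) ∂μ := by
          refine lintegral_congr_ae ?_
          filter_upwards [hw_nn] with x hx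
          exact Real.enorm_eq_ofReal hx
      _ ≤ 1 := hwlint
      _ < ⊤ := ENNReal.one_lt_top
  have hw_le1 : ∫ x, w x ∂μ ≤ 1 := by
    rw [integral_eq_lintegral_of_nonneg_ae hw_nn hwm.aestronglyMeasurable]
    calc (∫⁻ x, ENNReal.ofReal (w x) ∂μ).toReal ≤ (1 : ENNReal).toReal :=
          ENNReal.toReal_mono ENNReal.one_ne_top hwlint
      _ = 1 := ENNReal.toReal_one
  -- a.e. positivity
  have hGfinμ : ∀ᵐ x ∂μ, ν.rnDeriv μ x < ⊤ := Measure.rnDeriv_lt_top ν μ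
  have hgpos_ν : ∀ᵐ y ∂ν, 0 < g y := by
    filter_upwards [Measure.rnDeriv_pos hac, hac.ae_le hGfinμ] with y h1 h2
    exact ENNReal.toReal_pos h1.ne' h2.ne
  have hgTpos : ∀ᵐ x ∂μ, 0 < g (T x) :=
    (MeasureTheory.ae_map_iff hT.aemeasurable
      (measurableSet_lt measurable_const hgm)).mp hgpos_ν
  have hw_pos : ∀ᵐ x ∂μ, 0 < w x := by
    filter_upwards [hgTpos, hρ0] with x h1 h2
    exact mul_pos h1 h2
  -- log decomposition
  set LT : Ω → ℝ := fun x => Real.log (g (T x)) with hLT_def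
  have hLTm : Measurable LT := (Real.measurable_log.comp hgm).comp hT
  have hlog_split : ∀ᵐ x ∂μ, Real.log (w x) = LT x + Real.log (ρ x) := by
    filter_upwards [hgTpos, hρ0] with x h1 h2
    exact Real.log_mul h1.ne' h2.ne'
  have hlogw_le_w : ∀ᵐ x ∂μ, Real.log (w x) ≤ w x := by
    filter_upwards [hw_pos] with x hx
    linarith [Real.log_le_sub_one_of_pos hx]
  -- positive part of LT
  have I1 : ∫⁻ x, ENNReal.ofReal (LT x) ∂μ < ⊤ := by
    have h1 : ∫⁻ x, ENNReal.ofReal (LT x) ∂μ ≤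
        ∫⁻ x, (ENNReal.ofReal (Real.log (w x)) + ENNReal.ofReal (-Real.log (ρ x))) ∂μ := by
      refine lintegral_mono_ae ?_
      filter_upwards [hlog_split] with x hx
      have : LT x = Real.log (w x) + (-Real.log (ρ x)) := by linarith
      rw [this]
      exact ENNReal.ofReal_add_le
    have h2 : ∫⁻ x, ENNReal.ofReal (Real.log (w x)) ∂μ ≤ 1 := by
      refine le_trans (lintegral_mono_ae ?_) hwlint
      filter_upwards [hlogw_le_w] with x hx
      exact ENNReal.ofReal_le_ofReal hx
    have h3 : ∫⁻ x, ENNReal.ofReal (-Real.log (ρ x)) ∂μ < ⊤ := by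
      refine lt_of_le_of_lt (lintegral_mono fun x => ?_) hlogρ.2
      rw [Real.enorm_eq_ofReal_abs]
      exact ENNReal.ofReal_le_ofReal (neg_le_abs _)
    calc ∫⁻ x, ENNReal.ofReal (LT x) ∂μ
        ≤ ∫⁻ x, (ENNReal.ofReal (Real.log (w x)) + ENNReal.ofReal (-Real.log (ρ x))) ∂μ := h1
      _ = ∫⁻ x, ENNReal.ofReal (Real.log (w x)) ∂μ
          + ∫⁻ x, ENNReal.ofReal (-Real.log (ρ x)) ∂μ :=
          lintegral_add_left (ENNReal.measurable_ofReal.comp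
            (Real.measurable_log.comp hwm)) _
      _ < ⊤ := ENNReal.add_lt_top.mpr ⟨lt_of_le_of_lt h2 ENNReal.one_lt_top, h3⟩
  -- negative part of LT
  have I2 : ∫⁻ x, ENNReal.ofReal (-LT x) ∂μ < ⊤ := by
    have hfm : Measurable fun y => ENNReal.ofReal (-Real.log (g y)) :=
      ENNReal.measurable_ofReal.comp (Real.measurable_log.comp hgm).neg
    have e1 : ∫⁻ x, ENNReal.ofReal (-LT x) ∂μ
        = ∫⁻ y, ENNReal.ofReal (-Real.log (g y)) ∂ν := by
      rw [hν_def, lintegral_map hfm hT]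
    have e2 : ∫⁻ y, ENNReal.ofReal (-Real.log (g y)) ∂ν
        = ∫⁻ x, ν.rnDeriv μ x * ENNReal.ofReal (-Real.log (g x)) ∂μ := by
      conv_lhs => rw [← Measure.withDensity_rnDeriv_eq ν μ hac]
      rw [lintegral_withDensity_eq_lintegral_mul μ hGm hfm]
      rfl
    have hbound : ∀ᵐ x ∂μ, ν.rnDeriv μ x * ENNReal.ofReal (-Real.log (g x)) ≤ 1 := by
      filter_upwards [hGfinμ] with x hfin
      rcases eq_or_ne (ν.rnDeriv μ x) 0 with h0 | h0
      · simp [h0]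
      · have ht : 0 < g x := ENNReal.toReal_pos h0 hfin.ne
        have hlog : -Real.log (g x) ≤ (g x)⁻¹ - 1 := by
          have := Real.log_le_sub_one_of_pos (inv_pos.mpr ht)
          rwa [Real.log_inv] at this
        have hG : ν.rnDeriv μ x = ENNReal.ofReal (g x) :=
          (ENNReal.ofReal_toReal hfin.ne).symm
        rw [hG, ← ENNReal.ofReal_mul ht.le]
        have hinv : g x * (g x)⁻¹ = 1 := mul_inv_cancel₀ ht.ne'
        have h1 : g x * -Real.log (g x) ≤ 1 := by
          nlinarith [mul_le_mul_of_nonneg_left hlog ht.le]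
        calc ENNReal.ofReal (g x * -Real.log (g x)) ≤ ENNReal.ofReal 1 :=
              ENNReal.ofReal_le_ofReal h1
          _ = 1 := ENNReal.ofReal_one
    rw [e1, e2]
    calc ∫⁻ x, ν.rnDeriv μ x * ENNReal.ofReal (-Real.log (g x)) ∂μ
        ≤ ∫⁻ _, 1 ∂μ := lintegral_mono_ae hbound
      _ = 1 := by simp
      _ < ⊤ := ENNReal.one_lt_top
  have hLT_int : Integrable LT μ := by
    refine ⟨hLTm.aestronglyMeasurable, ?_⟩
    rw [HasFiniteIntegral]
    calc ∫⁻ x, (‖LT x‖₊ : ENNReal) ∂μ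
        = ∫⁻ x, (ENNReal.ofReal (LT x) + ENNReal.ofReal (-LT x)) ∂μ := by
          refine lintegral_congr fun x => ?_
          rw [← ofReal_abs_aux]; exact Real.enorm_eq_ofReal_abs _
      _ = ∫⁻ x, ENNReal.ofReal (LT x) ∂μ + ∫⁻ x, ENNReal.ofReal (-LT x) ∂μ :=
          lintegral_add_left (ENNReal.measurable_ofReal.comp hLTm) _
      _ < ⊤ := ENNReal.add_lt_top.mpr ⟨I1, I2⟩
  -- entropy integrand is integrable, and its integral equals ∫ LT
  have hlogg_int_ν : Integrable (fun y => Real.log (g y)) ν := by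
    refine (integrable_map_measure ?_ hT.aemeasurable).mpr ?_
    · exact (Real.measurable_log.comp hgm).aestronglyMeasurable
    · exact hLT_int
  have hEnt_int : Integrable (fun x => g x * Real.log (g x)) μ := by
    have := (MeasureTheory.integrable_rnDeriv_smul_iff (f := fun y => Real.log (g y)) hac).mpr
      hlogg_int_ν
    simpa [smul_eq_mul, hg_def] using this
  have hval : ∫ x, g x * Real.log (g x) ∂μ = ∫ x, LT x ∂μ := by
    calc ∫ x, g x * Real.log (g x) ∂μ
        = ∫ x, (ν.rnDeriv μ x).toReal • Real.log (g x) ∂μ := by simp [smul_eq_mul, hg_def]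
      _ = ∫ y, Real.log (g y) ∂ν := MeasureTheory.integral_rnDeriv_smul hac
      _ = ∫ x, LT x ∂μ := integral_map hT.aemeasurable
          (Real.measurable_log.comp hgm).aestronglyMeasurable
  -- Jensen-type bound
  have hlogw_int : Integrable (fun x => Real.log (w x)) μ :=
    (hLT_int.add hlogρ).congr (by filter_upwards [hlog_split] with x hx; simpa using hx.symm)
  have hlogw_le : ∫ x, Real.log (w x) ∂μ ≤ 0 := by
    have h1 : ∫ x, Real.log (w x) ∂μ ≤ ∫ x, (w x - 1) ∂μ := by
      refine integral_mono_ae hlogw_int (hw_int.sub (integrable_const 1)) ?_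
      filter_upwards [hw_pos] with x hx
      exact Real.log_le_sub_one_of_pos hx
    have h2 : ∫ x, (w x - 1) ∂μ = ∫ x, w x ∂μ - 1 := by
      rw [integral_sub hw_int (integrable_const 1), integral_const]
      simp
    linarith
  have hLT_val : ∫ x, LT x ∂μ = ∫ x, Real.log (w x) ∂μ - ∫ x, Real.log (ρ x) ∂μ := by
    have h1 : ∫ x, Real.log (w x) ∂μ = ∫ x, (LT x + Real.log (ρ x)) ∂μ :=
      integral_congr_ae hlog_split
    rw [integral_add hLT_int hlogρ] at h1
    linarith
  -- conclusion
  have hfinal : ∫ x, g x * Real.log (g x) ∂μ ≤ -∫ x, Real.log (ρ x) ∂μ := by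
    rw [hval, hLT_val]; linarith
  rw [relEntropy, if_pos ⟨hac, hEnt_int⟩]
  exact_mod_cast EReal.coe_le_coe_iff.mpr hfinal
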